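/- Let m, n be positive integers and let A and B be m×n complex matrices such that A Bᴴ = I_m (where Bᴴ denotes the conjugate transpose). Then the m×m matrix B Bᴴ is invertible, the matrix A Aᴴ − (B Bᴴ)⁻¹ is positive semidefinite, and moreover A Aᴴ = (B Bᴴ)⁻¹ holds if and only if A = (B Bᴴ)⁻¹ B. -/

import Mathlib

open Matrix ComplexOrder

/-- Invertible case of Lemma 1: if `A * Bᴴ = 1`, then `B * Bᴴ` is invertible,
`A * Aᴴ - (B * Bᴴ)⁻¹` is positive semidefinite, and equality
`A * Aᴴ = (B * Bᴴ)⁻¹` holds iff `A = (B * Bᴴ)⁻¹ * B`. -/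
theorem stmt_0 (m n : ℕ) (hm : 0 < m) (hn : 0 < n)
    (A B : Matrix (Fin m) (Fin n) ℂ) (h : A * Bᴴ = 1) :
    IsUnit (B * Bᴴ) ∧
    (A * Aᴴ - (B * Bᴴ)⁻¹).PosSemidef ∧
    (A * Aᴴ = (B * Bᴴ)⁻¹ ↔ A = (B * Bᴴ)⁻¹ * B) := by
  have hBA : B * Aᴴ = 1 := by
    have := congrArg conjTranspose h
    simpa using this
  have hG : (B * Bᴴ).PosDef := by
    refine posDef_iff_dotProduct_mulVec.mpr ⟨isHermitian_mul_conjTranspose_self B, fun x hx => ?_⟩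
    have hx' : Bᴴ *ᵥ x ≠ 0 := by
      intro h0
      apply hx
      have hxx : (A * Bᴴ) *ᵥ x = x := by rw [h, one_mulVec]
      rw [← hxx, ← mulVec_mulVec, h0, mulVec_zero]
    have hstar : star x ᵥ* B = star (Bᴴ *ᵥ x) := by
      rw [star_mulVec, conjTranspose_conjTranspose]
    rw [← mulVec_mulVec, dotProduct_mulVec, hstar]
    exact dotProduct_star_self_pos_iff.mpr hx'
  have hGu : IsUnit (B * Bᴴ) := hG.isUnit
  have hdet : IsUnit (B * Bᴴ).det := (isUnit_iff_isUnit_det _).mp hGu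
  have hG1 : (B * Bᴴ) * (B * Bᴴ)⁻¹ = 1 := mul_nonsing_inv _ hdet
  have hH : ((B * Bᴴ)⁻¹)ᴴ = (B * Bᴴ)⁻¹ := hG.isHermitian.inv
  have e1 : A * (Bᴴ * (B * Bᴴ)⁻¹) = (B * Bᴴ)⁻¹ := by
    rw [← Matrix.mul_assoc, h, Matrix.one_mul]
  have e2 : (B * Bᴴ)⁻¹ * B * Aᴴ = (B * Bᴴ)⁻¹ := by
    rw [Matrix.mul_assoc, hBA, Matrix.mul_one]
  have e3 : (B * Bᴴ)⁻¹ * B * (Bᴴ * (B * Bᴴ)⁻¹) = (B * Bᴴ)⁻¹ := by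
    rw [Matrix.mul_assoc, ← Matrix.mul_assoc B, ← Matrix.mul_assoc,
      Matrix.mul_assoc _ (B * Bᴴ), hG1, Matrix.mul_one]
  have key : (A - (B * Bᴴ)⁻¹ * B) * (A - (B * Bᴴ)⁻¹ * B)ᴴ = A * Aᴴ - (B * Bᴴ)⁻¹ := by
    rw [conjTranspose_sub, conjTranspose_mul, hH, Matrix.sub_mul, Matrix.mul_sub,
      Matrix.mul_sub, ← Matrix.mul_assoc A, h, Matrix.one_mul, e2, e3]
    abel
  refine ⟨hGu, ?_, ?_⟩
  · rw [← key]
    exact posSemidef_self_mul_conjTranspose _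
  · constructor
    · intro heq
      have : (A - (B * Bᴴ)⁻¹ * B) * (A - (B * Bᴴ)⁻¹ * B)ᴴ = 0 := by
        rw [key, heq, sub_self]
      exact sub_eq_zero.mp (self_mul_conjTranspose_eq_zero.mp this)
    · intro heq
      have h0 : A - (B * Bᴴ)⁻¹ * B = 0 := by rw [heq, sub_self]
      have := key.symm
      rw [h0, Matrix.zero_mul] at this
      exact sub_eq_zero.mp this
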